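/- Let G be a connected P_4-free graph on vertex set V with at least 2 vertices, which is not of the form K_1 * H for any graph H (i.e., G has no vertex adjacent to all others). Suppose {u,w} is an edge such that {u,w} is a dominating set of G. Set U = N(u) \ N[w], W = N(w) \ N[u], Z = N(u) ∩ N(w), and assume U and W are both nonempty. Then every vertex of U is adjacent to every vertex of W, and every vertex of Z is adjacent either to all vertices of U or to all vertices of W. -/

import Mathlib

open SimpleGraph

/-- The join of two simple graphs on disjoint vertex sets. -/
def joinG {V1 V2 : Type} (G1 : SimpleGraph V1) (G2 : SimpleGraph V2) :
    SimpleGraph (V1 ⊕ V2) where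
  Adj a b :=
    match a, b with
    | Sum.inl x, Sum.inl y => G1.Adj x y
    | Sum.inr x, Sum.inr y => G2.Adj x y
    | Sum.inl _, Sum.inr _ => True
    | Sum.inr _, Sum.inl _ => True
  symm := by
    constructor
    intro a b h
    cases a <;> cases b <;> simp_all <;> exact h.symm
  loopless := by
    constructor
    intro a
    cases a <;> simp

/-- A graph `G` contains an induced copy of the path on `k` vertices iff there is a
graph embedding (= isomorphism onto an induced subgraph) of `pathGraph k` into `G`. -/
def HasInducedPathOn {V : Type} (G : SimpleGraph V) (k : ℕ) : Prop :=
  Nonempty (SimpleGraph.pathGraph k ↪g G)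

/-- `G` is `P_k`-free. -/
def PFree {V : Type} (G : SimpleGraph V) (k : ℕ) : Prop :=
  ¬ HasInducedPathOn G k

/-- Length (number of edges) of a longest induced path of `G`. -/
noncomputable def longestInducedPathLen {V : Type} (G : SimpleGraph V) : ℕ :=
  sSup {k : ℕ | HasInducedPathOn G (k + 1)}

/-- `X` is a dominating set of `G`. -/
def IsDomSet {V : Type} (G : SimpleGraph V) (X : Set V) : Prop :=
  ∀ v ∉ X, ∃ u ∈ X, G.Adj v u

/-- `X` is a connected dominating set of `G`. -/
def IsConnDomSet {V : Type} (G : SimpleGraph V) (X : Set V) : Prop :=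
  IsDomSet G X ∧ (G.induce X).Connected

/-- A minimum connected dominating set. -/
def IsMinimumConnDomSet {V : Type} (G : SimpleGraph V) (X : Set V) : Prop :=
  IsConnDomSet G X ∧ ∀ Y : Set V, IsConnDomSet G Y → X.ncard ≤ Y.ncard

/-- Weakly closed graph: it admits a labeling of its vertices such that whenever
`{a,b}` is an edge and `c` has a label strictly between those of `a` and `b`,
then `c` is adjacent to `a` or to `b`. -/
def WeaklyClosed {V : Type} [Fintype V] (G : SimpleGraph V) : Prop :=
  ∃ e : V ≃ Fin (Fintype.card V),
    ∀ a b c : V, G.Adj a b → e a < e c → e c < e b → (G.Adj a c ∨ G.Adj b c)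

/-- Number of connected components. -/
noncomputable def numComp {V : Type} (G : SimpleGraph V) : ℕ :=
  Nat.card G.ConnectedComponent

/-- The collection `C(G)` of sets with the cut point property, together with `∅`. -/
def cutSets {V : Type} (G : SimpleGraph V) : Set (Set V) :=
  {(∅ : Set V)} ∪
    {T : Set V | T ⊂ Set.univ ∧ ∀ i ∈ T,
      numComp (G.induce (Tᶜ ∪ {i})) < numComp (G.induce Tᶜ)}

/-- The collection `C(H)` for the induced subgraph `H` of `G` on a subset `W`,
viewed as a collection of subsets of the ambient vertex set. -/
def relCutSets {V : Type} (G : SimpleGraph V) (W : Set V) : Set (Set V) :=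
  {T : Set V | T ⊆ W ∧ (T = ∅ ∨ (T ≠ W ∧ ∀ i ∈ T,
    numComp (G.induce ((W \ T) ∪ {i})) < numComp (G.induce (W \ T))))}

/-- `G` is `ℓ`-connected. -/
def LConnected {V : Type} [Fintype V] (G : SimpleGraph V) (ℓ : ℕ) : Prop :=
  ℓ + 1 ≤ Fintype.card V ∧
    ∀ A : Set V, A.ncard < ℓ → (G.induce Aᶜ).Connected

/-- A maximal clique of `G`. -/
def IsMaxClique {V : Type} (G : SimpleGraph V) (s : Set V) : Prop :=
  G.IsClique s ∧ ∀ t : Set V, G.IsClique t → s ⊆ t → s = t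


lemma p4_of {V : Type} (G : SimpleGraph V) (a b c d : V)
    (hab : G.Adj a b) (hbc : G.Adj b c) (hcd : G.Adj c d)
    (hac : ¬ G.Adj a c) (had : ¬ G.Adj a d) (hbd : ¬ G.Adj b d) :
    HasInducedPathOn G 4 := by
  have hne : ∀ x y : V, G.Adj x y → x ≠ y := fun x y h => h.ne
  have hab' := hne _ _ hab
  have hbc' := hne _ _ hbc
  have hcd' := hne _ _ hcd
  have hac' : a ≠ c := by rintro rfl; exact had hcd
  have had' : a ≠ d := by rintro rfl; exact hbd hab.symm
  have hbd' : b ≠ d := by rintro rfl; exact had hab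
  refine ⟨⟨⟨![a,b,c,d], ?_⟩, ?_⟩⟩
  · intro i j h
    fin_cases i <;> fin_cases j <;> simp_all <;> tauto
  · intro i j
    fin_cases i <;> fin_cases j <;>
      simp [SimpleGraph.pathGraph_adj, show ((3:Fin 4):ℕ)=3 from rfl] <;>
      first
        | exact hab | exact hbc | exact hcd | exact hab.symm | exact hbc.symm
        | exact hcd.symm | exact hac | exact had | exact hbd
        | exact fun h => hac h.symm | exact fun h => had h.symm
        | exact fun h => hbd h.symm | exact G.loopless _

theorem stmt5 {V : Type} [Fintype V] (G : SimpleGraph V)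
    (hconn : G.Connected) (hfree : PFree G 4) (hcard : 2 ≤ Fintype.card V)
    (hnotcone : ¬ ∃ v : V, ∀ w : V, w ≠ v → G.Adj v w)
    (u w : V) (huw : G.Adj u w)
    (hdom : IsDomSet G ({u, w} : Set V))
    (U W Z : Set V)
    (hU : U = G.neighborSet u \ (insert w (G.neighborSet w)))
    (hW : W = G.neighborSet w \ (insert u (G.neighborSet u)))
    (hZ : Z = G.neighborSet u ∩ G.neighborSet w)
    (hUne : U.Nonempty) (hWne : W.Nonempty) :
    (∀ a ∈ U, ∀ b ∈ W, G.Adj a b) ∧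
      (∀ z ∈ Z, (∀ a ∈ U, G.Adj z a) ∨ (∀ b ∈ W, G.Adj z b)) := by
  have hmemU : ∀ a ∈ U, G.Adj u a ∧ ¬ G.Adj w a ∧ a ≠ w := by
    intro a ha; rw [hU] at ha
    simp only [Set.mem_diff, Set.mem_insert_iff, SimpleGraph.mem_neighborSet] at ha
    exact ⟨ha.1, fun h => ha.2 (Or.inr h), fun h => ha.2 (Or.inl h)⟩
  have hmemW : ∀ b ∈ W, G.Adj w b ∧ ¬ G.Adj u b ∧ b ≠ u := by
    intro b hb; rw [hW] at hb
    simp only [Set.mem_diff, Set.mem_insert_iff, SimpleGraph.mem_neighborSet] at hb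
    exact ⟨hb.1, fun h => hb.2 (Or.inr h), fun h => hb.2 (Or.inl h)⟩
  have part1 : ∀ a ∈ U, ∀ b ∈ W, G.Adj a b := by
    intro a ha b hb
    obtain ⟨hua, hwa, _⟩ := hmemU a ha
    obtain ⟨hwb, hub, _⟩ := hmemW b hb
    by_contra hab
    exact hfree (p4_of G a u w b hua.symm huw hwb
      (fun h => hwa h.symm) hab hub)
  refine ⟨part1, ?_⟩
  intro z hz
  rw [hZ] at hz
  obtain ⟨huz, hwz⟩ := hz
  by_contra hc
  push_neg at hc
  obtain ⟨⟨a, ha, hza⟩, ⟨b, hb, hzb⟩⟩ := hc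
  obtain ⟨hua, hwa, _⟩ := hmemU a ha
  obtain ⟨hwb, hub, _⟩ := hmemW b hb
  have hab : G.Adj a b := part1 a ha b hb
  exact hfree (p4_of G z u a b (SimpleGraph.mem_neighborSet G u z |>.mp huz).symm hua hab
    hza hzb hub)
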